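/- Let β : V × V → L ⊕ L be defined from a symmetric bilinear form α : V × V → L^p (L^p Lorentzian of dimension p) by β(X,Y) = (α(X,Y)+α(JX,JY), α(X,JY)−α(JX,Y)), and endow L ⊕ L with the form ⟨⟨(ξ,ξ̄),(η,η̄)⟩⟩ = ⟨ξ,η⟩ − ⟨ξ̄,η̄⟩. If S(β) ≠ 0 and the subspace S(β) is degenerate, then 1 ≤ dim π₁(S(β)) ≤ p−1, and there exists a nonzero light-like vector v ∈ π₁(S(β)) such that S(β) ∩ (S(β))^⊥ = span{v} ⊕ span{v}. -/

import Mathlib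

/-- If S(β) ≠ 0 is degenerate then 1 ≤ dim U₀ ≤ p−1 and there is a nonzero
light-like v ∈ U₀ with S(β) ∩ S(β)^⊥ = span{v} ⊕ span{v}. -/
theorem stmt_6 (n p : ℕ) (V L : Type*) [AddCommGroup V] [Module ℝ V]
    [AddCommGroup L] [Module ℝ L] [FiniteDimensional ℝ L]
    (hdV : Module.finrank ℝ V = 2 * n) (hdL : Module.finrank ℝ L = p)
    (BL : LinearMap.BilinForm ℝ L) (hLsymm : BL.IsSymm)
    (hLor : ∃ w : L, BL w w = -1 ∧ ∀ x : L, BL x w = 0 → x ≠ 0 → 0 < BL x x)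
    (J : V →ₗ[ℝ] V) (hJ : J ∘ₗ J = -LinearMap.id)
    (α : V →ₗ[ℝ] V →ₗ[ℝ] L) (hαsymm : ∀ X Y : V, α X Y = α Y X)
    (β : V →ₗ[ℝ] V →ₗ[ℝ] L × L)
    (hβ : ∀ X Y : V, β X Y = (α X Y + α (J X) (J Y), α X (J Y) - α (J X) Y))
    (Bw : LinearMap.BilinForm ℝ (L × L))
    (hBw : ∀ a b : L × L, Bw a b = BL a.1 b.1 - BL a.2 b.2)
    (Sβ : Submodule ℝ (L × L))
    (hSβ : Sβ = Submodule.span ℝ {z : L × L | ∃ X Y : V, z = β X Y})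
    (hne : Sβ ≠ ⊥) (hdeg : Sβ ⊓ Bw.orthogonal Sβ ≠ ⊥) :
    (1 ≤ Module.finrank ℝ (Submodule.map (LinearMap.fst ℝ L L) Sβ) ∧
      Module.finrank ℝ (Submodule.map (LinearMap.fst ℝ L L) Sβ) ≤ p - 1) ∧
    ∃ v : L, v ≠ 0 ∧ BL v v = 0 ∧ v ∈ Submodule.map (LinearMap.fst ℝ L L) Sβ ∧
      Sβ ⊓ Bw.orthogonal Sβ =
        (Submodule.span ℝ {v}).prod (Submodule.span ℝ {v}) := by
  classical
  have hJJ : ∀ X : V, J (J X) = -X := by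
    intro X
    have h := congrArg (fun f : V →ₗ[ℝ] V => f X) hJ
    simpa using h
  have hsym : ∀ x y : L, BL x y = BL y x := by
    intro x y
    have := hLsymm.eq x y
    simpa using this
  obtain ⟨w₀, hw₀, hpos⟩ := hLor
  -- positivity contrapositive
  have hzero : ∀ y : L, BL y w₀ = 0 → BL y y = 0 → y = 0 := by
    intro y h1 h2
    by_contra hy
    exact absurd h2 (ne_of_gt (hpos y h1 hy))
  -- Lorentzian key lemma: two orthogonal isotropic vectors are parallel
  have key : ∀ u x : L, BL u u = 0 → BL x x = 0 → BL u x = 0 → u ≠ 0 →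
      ∃ t : ℝ, x = t • u := by
    intro u x huu hxx hux hu
    set a := BL u w₀ with ha
    set b := BL x w₀ with hb
    have ha0 : a ≠ 0 := by
      intro h0
      exact hu (hzero u (by rw [← ha, h0]) huu)
    have hx0 : b • u - a • x = 0 := by
      apply hzero
      · simp only [map_sub, map_smul, LinearMap.sub_apply, LinearMap.smul_apply,
          smul_eq_mul]
        rw [← ha, ← hb]; ring
      · have e1 : BL (b • u - a • x) (b • u - a • x)
            = b * b * BL u u - b * a * BL u x - a * b * BL x u + a * a * BL x x := by
          simp only [map_sub, map_smul, LinearMap.sub_apply, LinearMap.smul_apply,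
            smul_eq_mul]
          ring
        rw [e1, huu, hxx, hux, hsym x u, hux]; ring
    have hax : a • x = b • u := (sub_eq_zero.mp hx0).symm
    refine ⟨b / a, ?_⟩
    have h2 := congrArg (fun y : L => a⁻¹ • y) hax
    simp only [smul_smul] at h2
    rw [inv_mul_cancel₀ ha0, one_smul] at h2
    rw [h2, div_eq_inv_mul]
  -- the rotation and conjugation operators
  set R : L × L →ₗ[ℝ] L × L :=
    (-(LinearMap.snd ℝ L L)).prod (LinearMap.fst ℝ L L) with hRdef
  set C : L × L →ₗ[ℝ] L × L :=
    (LinearMap.fst ℝ L L).prod (-(LinearMap.snd ℝ L L)) with hCdef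
  have hRap : ∀ z : L × L, R z = (-z.2, z.1) := fun z => rfl
  have hCap : ∀ z : L × L, C z = (z.1, -z.2) := fun z => rfl
  have hRR : ∀ z : L × L, R (R z) = -z := by
    intro z; simp [hRap, Prod.ext_iff]
  have hRβ : ∀ X Y : V, R (β X Y) = β (J X) Y := by
    intro X Y
    rw [hβ X Y, hβ (J X) Y, hRap, Prod.ext_iff]
    simp only [hJJ, map_neg, LinearMap.neg_apply]
    constructor
    · abel
    · abel
  have hCβ : ∀ X Y : V, C (β X Y) = β Y X := by
    intro X Y
    rw [hβ X Y, hβ Y X, hCap, Prod.ext_iff]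
    constructor
    · simp only; rw [hαsymm X Y, hαsymm (J X) (J Y)]
    · simp only; rw [hαsymm X (J Y), hαsymm (J X) Y]; abel
  -- invariance of Sβ
  have hgen : ∀ z ∈ {z : L × L | ∃ X Y : V, z = β X Y}, z ∈ Sβ := by
    intro z hz; rw [hSβ]; exact Submodule.subset_span hz
  have hRS : ∀ z ∈ Sβ, R z ∈ Sβ := by
    intro z hz
    rw [hSβ] at hz ⊢
    induction hz using Submodule.span_induction with
    | mem x hx =>
        obtain ⟨X, Y, rfl⟩ := hx
        exact Submodule.subset_span ⟨J X, Y, hRβ X Y⟩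
    | zero => simp
    | add x y hx hy ihx ihy => rw [map_add]; exact Submodule.add_mem _ ihx ihy
    | smul c x hx ih => rw [map_smul]; exact Submodule.smul_mem _ c ih
  have hCS : ∀ z ∈ Sβ, C z ∈ Sβ := by
    intro z hz
    rw [hSβ] at hz ⊢
    induction hz using Submodule.span_induction with
    | mem x hx =>
        obtain ⟨X, Y, rfl⟩ := hx
        exact Submodule.subset_span ⟨Y, X, hCβ X Y⟩
    | zero => simp
    | add x y hx hy ihx ihy => rw [map_add]; exact Submodule.add_mem _ ihx ihy
    | smul c x hx ih => rw [map_smul]; exact Submodule.smul_mem _ c ih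
  -- Bw behaviour
  have hBwR : ∀ x y : L × L, Bw (R x) (R y) = -(Bw x y) := by
    intro x y
    simp only [hRap, hBw, map_neg, LinearMap.neg_apply, neg_neg]
    ring
  have hBwC : ∀ x y : L × L, Bw (C x) (C y) = Bw x y := by
    intro x y
    simp only [hCap, hBw, map_neg, LinearMap.neg_apply, neg_neg]
  -- invariance of the orthogonal complement
  have hRO : ∀ z ∈ Bw.orthogonal Sβ, R z ∈ Bw.orthogonal Sβ := by
    intro z hz
    intro s hs
    have h4 : R (R (R (R s))) = s := by rw [hRR (R (R s)), hRR s, neg_neg]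
    have h3 : R (R (R s)) ∈ Sβ := hRS _ (hRS _ (hRS _ hs))
    have := hBwR (R (R (R s))) z
    have hz3 := hz _ h3
    show Bw s (R z) = 0
    rw [← h4, this, hz3, neg_zero]
  have hCO : ∀ z ∈ Bw.orthogonal Sβ, C z ∈ Bw.orthogonal Sβ := by
    intro z hz
    intro s hs
    have h2 : C (C s) = s := by simp [hCap, Prod.ext_iff]
    have := hBwC (C s) z
    show Bw s (C z) = 0
    rw [← h2, this]
    exact hz _ (hCS _ hs)
  -- the degenerate part
  have hRN : ∀ z ∈ Sβ ⊓ Bw.orthogonal Sβ, R z ∈ Sβ ⊓ Bw.orthogonal Sβ := by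
    intro z hz; exact ⟨hRS _ hz.1, hRO _ hz.2⟩
  have hCN : ∀ z ∈ Sβ ⊓ Bw.orthogonal Sβ, C z ∈ Sβ ⊓ Bw.orthogonal Sβ := by
    intro z hz; exact ⟨hCS _ hz.1, hCO _ hz.2⟩
  have hNorth : ∀ z ∈ Sβ ⊓ Bw.orthogonal Sβ, ∀ w ∈ Sβ ⊓ Bw.orthogonal Sβ,
      Bw z w = 0 := by
    intro z hz w hw
    exact hw.2 z hz.1
  -- components of the degenerate part are mutually orthogonal isotropic vectors
  have hcomp : ∀ z ∈ Sβ ⊓ Bw.orthogonal Sβ, ∀ w ∈ Sβ ⊓ Bw.orthogonal Sβ,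
      BL z.1 w.1 = 0 ∧ BL z.1 w.2 = 0 ∧ BL z.2 w.1 = 0 ∧ BL z.2 w.2 = 0 := by
    intro z hz w hw
    have e1 := hNorth z hz w hw
    have e2 := hNorth z hz (R w) (hRN w hw)
    have e3 := hNorth (C z) (hCN z hz) w hw
    have e4 := hNorth (C z) (hCN z hz) (R w) (hRN w hw)
    rw [hBw] at e1 e2 e3 e4
    rw [hRap] at e2 e4
    rw [hCap] at e3 e4
    simp only [map_neg, LinearMap.neg_apply] at e2 e3 e4
    refine ⟨by linarith, by linarith, by linarith, by linarith⟩
  -- find a nonzero element with nonzero first component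
  obtain ⟨z₀, hz₀N, hz₀⟩ := Submodule.ne_bot_iff _ |>.mp hdeg
  obtain ⟨z₁, hz₁N, hz₁⟩ : ∃ z ∈ Sβ ⊓ Bw.orthogonal Sβ, z.1 ≠ 0 := by
    by_cases h : z₀.1 ≠ 0
    · exact ⟨z₀, hz₀N, h⟩
    · push_neg at h
      refine ⟨R z₀, hRN z₀ hz₀N, ?_⟩
      rw [hRap]
      simp only [neg_ne_zero]
      intro h2
      exact hz₀ (Prod.ext h h2)
  set v : L := z₁.1 with hv
  have hvne : v ≠ 0 := hz₁
  have hvv : BL v v = 0 := (hcomp z₁ hz₁N z₁ hz₁N).1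
  -- second component of z₁ is a multiple of v
  have h22 : BL z₁.2 z₁.2 = 0 := (hcomp z₁ hz₁N z₁ hz₁N).2.2.2
  have h12 : BL v z₁.2 = 0 := (hcomp z₁ hz₁N z₁ hz₁N).2.1
  obtain ⟨t, ht⟩ := key v z₁.2 hvv h22 h12 hvne
  -- (v, 0) and (0, v) belong to the degenerate part
  have hv0 : ((v, 0) : L × L) ∈ Sβ ⊓ Bw.orthogonal Sβ := by
    have hmem : z₁ - t • R z₁ ∈ Sβ ⊓ Bw.orthogonal Sβ :=
      Submodule.sub_mem _ hz₁N (Submodule.smul_mem _ t (hRN z₁ hz₁N))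
    have heq : z₁ - t • R z₁ = ((1 + t * t) • v, 0) := by
      rw [hRap, Prod.ext_iff]
      constructor
      · show z₁.1 - t • (-z₁.2) = (1 + t * t) • v
        rw [ht, ← hv]
        rw [smul_neg, sub_neg_eq_add, smul_smul]
        rw [add_smul, one_smul]
      · show z₁.2 - t • z₁.1 = 0
        rw [ht, ← hv, sub_eq_zero]
    have h1t : (1 + t * t) ≠ 0 := by nlinarith
    have := Submodule.smul_mem _ (1 + t * t)⁻¹ (heq ▸ hmem)
    have heq2 : (1 + t * t)⁻¹ • (((1 + t * t) • v, (0 : L)) : L × L) = ((v, 0) : L × L) := by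
      rw [Prod.smul_mk, smul_smul, inv_mul_cancel₀ h1t, one_smul, smul_zero]
    rwa [heq2] at this
  have h0v : ((0, v) : L × L) ∈ Sβ ⊓ Bw.orthogonal Sβ := by
    have := hRN _ hv0
    rw [hRap] at this
    simpa using this
  -- the equality of the degenerate part with span v × span v
  have hNeq : Sβ ⊓ Bw.orthogonal Sβ
      = (Submodule.span ℝ {v}).prod (Submodule.span ℝ {v}) := by
    apply le_antisymm
    · intro z hz
      rw [Submodule.mem_prod]
      have h1 := hcomp ((v, 0) : L × L) hv0 z hz
      have hz11 := (hcomp z hz z hz).1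
      have hz22 := (hcomp z hz z hz).2.2.2
      obtain ⟨s, hs⟩ := key v z.1 hvv hz11 h1.1 hvne
      obtain ⟨u, hu⟩ := key v z.2 hvv hz22 h1.2.1 hvne
      exact ⟨Submodule.mem_span_singleton.mpr ⟨s, hs.symm⟩,
        Submodule.mem_span_singleton.mpr ⟨u, hu.symm⟩⟩
    · intro z hz
      rw [Submodule.mem_prod] at hz
      obtain ⟨s, hs⟩ := Submodule.mem_span_singleton.mp hz.1
      obtain ⟨u, hu⟩ := Submodule.mem_span_singleton.mp hz.2
      have heq : z = s • ((v, 0) : L × L) + u • ((0, v) : L × L) := by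
        rw [Prod.ext_iff]
        constructor
        · simp [← hs]
        · simp [← hu]
      rw [heq]
      exact Submodule.add_mem _ (Submodule.smul_mem _ s hv0)
        (Submodule.smul_mem _ u h0v)
  -- v lies in the projection
  have hvU : v ∈ Submodule.map (LinearMap.fst ℝ L L) Sβ :=
    ⟨((v, 0) : L × L), hv0.1, rfl⟩
  -- dimension bounds
  set U := Submodule.map (LinearMap.fst ℝ L L) Sβ with hU
  have hlow : 1 ≤ Module.finrank ℝ U := by
    have h1 : Submodule.span ℝ {v} ≤ U := by
      rw [Submodule.span_le, Set.singleton_subset_iff]; exact hvU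
    have h2 : Module.finrank ℝ (Submodule.span ℝ {v}) = 1 :=
      finrank_span_singleton hvne
    calc 1 = Module.finrank ℝ (Submodule.span ℝ {v}) := h2.symm
      _ ≤ Module.finrank ℝ U := Submodule.finrank_mono h1
  have hhigh : Module.finrank ℝ U ≤ p - 1 := by
    set f : L →ₗ[ℝ] ℝ := BL.flip v with hf
    have hfw : f w₀ ≠ 0 := by
      show BL w₀ v ≠ 0
      intro h0
      have : BL v w₀ = 0 := by rw [hsym]; exact h0
      exact absurd hvv (ne_of_gt (hpos v this hvne))
    have hUker : U ≤ LinearMap.ker f := by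
      rintro - ⟨z, hz, rfl⟩
      have h5 : Bw z ((v, 0) : L × L) = 0 := hv0.2 z hz
      rw [hBw] at h5
      show BL z.1 v = 0
      simpa using h5
    have hrange : Module.finrank ℝ (LinearMap.range f) = 1 := by
      have hle : Module.finrank ℝ (LinearMap.range f) ≤ 1 := by
        have := Submodule.finrank_le (LinearMap.range f)
        simpa using this
      have hge : 1 ≤ Module.finrank ℝ (LinearMap.range f) := by
        have h1 : Submodule.span ℝ {f w₀} ≤ LinearMap.range f := by
          rw [Submodule.span_le, Set.singleton_subset_iff]
          exact LinearMap.mem_range_self f w₀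
        calc 1 = Module.finrank ℝ (Submodule.span ℝ {f w₀}) :=
              (finrank_span_singleton hfw).symm
          _ ≤ _ := Submodule.finrank_mono h1
      omega
    have hker : Module.finrank ℝ (LinearMap.ker f) = p - 1 := by
      have := LinearMap.finrank_range_add_finrank_ker f
      rw [hrange, hdL] at this
      omega
    calc Module.finrank ℝ U ≤ Module.finrank ℝ (LinearMap.ker f) :=
          Submodule.finrank_mono hUker
      _ = p - 1 := hker
  exact ⟨⟨hlow, hhigh⟩, v, hvne, hvv, hvU, hNeq⟩
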